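/- Let n ≥ 4 be an integer and let A = (a_{ij}) ∈ Δ_n^2. If a_{2,2} = 0, then a_{2,3} = 1 and a_{3,2} = 1. -/

import Mathlib

/-- The integer encoded (in binary, most significant digit first) by the `i`-th row
of the binary matrix `A`, i.e. `x_i = ∑_j a_{ij} 2^{m-j}` (1-indexed). -/
def rowVal {n m : ℕ} (A : Fin n → Fin m → Fin 2) (i : Fin n) : ℕ :=
  ∑ j : Fin m, (A i j : ℕ) * 2 ^ (m - 1 - (j : ℕ))

/-- The integer encoded by the `j`-th column of `A`, i.e. `y_j = ∑_i a_{ij} 2^{n-i}`. -/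
def colVal {n m : ℕ} (A : Fin n → Fin m → Fin 2) (j : Fin m) : ℕ :=
  ∑ i : Fin n, (A i j : ℕ) * 2 ^ (n - 1 - (i : ℕ))

/-- `A ∈ 𝔠_{n×m}`: rows and columns sorted in lexicographically nondecreasing order. -/
def memC {n m : ℕ} (A : Fin n → Fin m → Fin 2) : Prop :=
  Monotone (rowVal A) ∧ Monotone (colVal A)

/-- `A ∈ 𝔡_{n×m}`: rows and columns sorted in lexicographically nonincreasing order. -/
def memD {n m : ℕ} (A : Fin n → Fin m → Fin 2) : Prop :=
  Antitone (rowVal A) ∧ Antitone (colVal A)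

/-- `Λ_n^k`: n×n binary matrices with exactly `k` ones in each row and each column. -/
def lambdaSet (n k : ℕ) : Set (Fin n → Fin n → Fin 2) :=
  {A | (∀ i, ∑ j, (A i j : ℕ) = k) ∧ (∀ j, ∑ i, (A i j : ℕ) = k)}

/-- `Γ_n^k = 𝔠_{n×n} ∩ Λ_n^k`. -/
def GammaSet (n k : ℕ) : Set (Fin n → Fin n → Fin 2) :=
  {A | memC A} ∩ lambdaSet n k

/-- `Δ_n^k = 𝔡_{n×n} ∩ Λ_n^k`. -/
def DeltaSet (n k : ℕ) : Set (Fin n → Fin n → Fin 2) :=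
  {A | memD A} ∩ lambdaSet n k

/-- `γ(n,k) = |Γ_n^k|`. -/
noncomputable def gammaCard (n k : ℕ) : ℕ := (GammaSet n k).ncard

/-- `δ(n,k) = |Δ_n^k|`. -/
noncomputable def deltaCard (n k : ℕ) : ℕ := (DeltaSet n k).ncard

lemma fin2aux (x : Fin 2) : x = 0 ∨ x = 1 := by
  fin_cases x
  · exact Or.inl rfl
  · exact Or.inr rfl

lemma sum_pow_aux (m : ℕ) : ∑ t ∈ Finset.range m, 2 ^ t = 2 ^ m - 1 := by
  induction m with
  | zero => simp
  | succ m ih =>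
    rw [Finset.sum_range_succ, ih]
    have h1 : 1 ≤ 2 ^ m := Nat.one_le_two_pow
    have h2 : 2 ^ (m + 1) = 2 * 2 ^ m := by ring
    omega

lemma val_ge_aux {n : ℕ} (f : Fin n → Fin 2) (i : Fin n) (h : f i = 1) :
    2 ^ (n - 1 - (i : ℕ)) ≤ ∑ j : Fin n, (f j : ℕ) * 2 ^ (n - 1 - (j : ℕ)) := by
  have := Finset.single_le_sum (f := fun j : Fin n => (f j : ℕ) * 2 ^ (n - 1 - (j : ℕ)))
    (fun j _ => Nat.zero_le _) (Finset.mem_univ i)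
  simpa [h] using this

lemma val_lt_aux {n : ℕ} (f : Fin n → Fin 2) (k : ℕ)
    (h : ∀ i : Fin n, (i : ℕ) < k → f i = 0) :
    ∑ i : Fin n, (f i : ℕ) * 2 ^ (n - 1 - (i : ℕ)) < 2 ^ (n - k) := by
  classical
  set S : Finset (Fin n) := Finset.univ.filter (fun i : Fin n => ¬ (i : ℕ) < k) with hS
  have h1 : ∑ i : Fin n, (f i : ℕ) * 2 ^ (n - 1 - (i : ℕ)) ≤
      ∑ i ∈ S, 2 ^ (n - 1 - (i : ℕ)) := by
    calc ∑ i : Fin n, (f i : ℕ) * 2 ^ (n - 1 - (i : ℕ))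
        ≤ ∑ i : Fin n, (if (i : ℕ) < k then 0 else 2 ^ (n - 1 - (i : ℕ))) := by
          refine Finset.sum_le_sum (fun i _ => ?_)
          split
          · simp [h i ‹_›]
          · have hle : (f i : ℕ) ≤ 1 := by have := (f i).isLt; omega
            calc (f i : ℕ) * 2 ^ (n - 1 - (i : ℕ)) ≤ 1 * 2 ^ (n - 1 - (i : ℕ)) :=
                  Nat.mul_le_mul_right _ hle
              _ = 2 ^ (n - 1 - (i : ℕ)) := one_mul _
      _ = ∑ i ∈ S, 2 ^ (n - 1 - (i : ℕ)) := by rw [Finset.sum_ite]; simp [hS]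
  have h2 : ∑ t ∈ S.image (fun i : Fin n => n - 1 - (i : ℕ)), 2 ^ t =
      ∑ i ∈ S, 2 ^ (n - 1 - (i : ℕ)) := by
    refine Finset.sum_image ?_
    intro x hx y hy hxy
    have hx' : ¬ (x : ℕ) < k := (Finset.mem_filter.mp hx).2
    have hy' : ¬ (y : ℕ) < k := (Finset.mem_filter.mp hy).2
    have := x.isLt; have := y.isLt
    have hxy' : n - 1 - (x : ℕ) = n - 1 - (y : ℕ) := hxy
    exact Fin.ext (by omega)
  have h3 : S.image (fun i : Fin n => n - 1 - (i : ℕ)) ⊆ Finset.range (n - k) := by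
    intro t ht
    simp only [Finset.mem_image, Finset.mem_filter, Finset.mem_univ, true_and, hS] at ht
    obtain ⟨i, hi, rfl⟩ := ht
    have := i.isLt
    simp only [Finset.mem_range]
    omega
  have h4 : ∑ t ∈ S.image (fun i : Fin n => n - 1 - (i : ℕ)), 2 ^ t ≤
      ∑ t ∈ Finset.range (n - k), 2 ^ t := Finset.sum_le_sum_of_subset h3
  rw [sum_pow_aux] at h4
  have h5 : 0 < 2 ^ (n - k) := Nat.pow_pos (by norm_num)
  omega

lemma exists_one_ge_aux {n : ℕ} (f : Fin n → Fin 2) (h : ∑ j : Fin n, (f j : ℕ) = 2)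
    (k : ℕ) (l : Fin n) (hz : ∀ j : Fin n, (j : ℕ) < k → j ≠ l → f j = 0) :
    ∃ j : Fin n, k ≤ (j : ℕ) ∧ f j = 1 := by
  by_contra hc
  push_neg at hc
  have hb : ∀ j : Fin n, (f j : ℕ) ≤ if j = l then 1 else 0 := by
    intro j
    split
    · have := (f j).isLt; omega
    · rcases lt_or_ge (j : ℕ) k with h1 | h1
      · simp [hz j h1 ‹j ≠ l›]
      · rcases fin2aux (f j) with h2 | h2
        · simp [h2]
        · exact absurd h2 (hc j h1)
  have : (2 : ℕ) ≤ 1 := by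
    calc (2 : ℕ) = ∑ j : Fin n, (f j : ℕ) := h.symm
      _ ≤ ∑ j : Fin n, (if j = l then 1 else 0) := Finset.sum_le_sum (fun j _ => hb j)
      _ = 1 := by simp
  omega

lemma three_aux {n : ℕ} (f : Fin n → Fin 2) (hsum : ∑ j : Fin n, (f j : ℕ) = 2)
    (a b : Fin n) (hab : a ≠ b) (ha : f a = 1) (hb : f b = 1) :
    ∀ j, j ≠ a → j ≠ b → f j = 0 := by
  intro j hja hjb
  rcases fin2aux (f j) with h | h
  · exact h
  · exfalso
    have hsub : ∑ x ∈ ({a, b, j} : Finset (Fin n)), (f x : ℕ) ≤ ∑ x : Fin n, (f x : ℕ) :=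
      Finset.sum_le_sum_of_subset (Finset.subset_univ _)
    have h3 : ∑ x ∈ ({a, b, j} : Finset (Fin n)), (f x : ℕ) = 3 := by
      rw [Finset.sum_insert (by simp [hab, Ne.symm hja]),
        Finset.sum_insert (by simp [Ne.symm hjb]), Finset.sum_singleton]
      simp [ha, hb, h]
    omega

/-- Theorem (0-indexed): if `A ∈ Δ_n^2`, `n ≥ 4`, and `a_{11} = 0`, then `a_{12} = a_{21} = 1`. -/
theorem step_of_Delta_two (n : ℕ) (hn : 4 ≤ n) (A : Fin n → Fin n → Fin 2)
    (hA : A ∈ DeltaSet n 2) (h22 : A ⟨1, by omega⟩ ⟨1, by omega⟩ = 0) :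
    A ⟨1, by omega⟩ ⟨2, by omega⟩ = 1 ∧ A ⟨2, by omega⟩ ⟨1, by omega⟩ = 1 := by
  obtain ⟨⟨hrA, hcA⟩, hrow, hcol⟩ := hA
  set e0 : Fin n := ⟨0, by omega⟩ with he0
  set e1 : Fin n := ⟨1, by omega⟩ with he1
  set e2 : Fin n := ⟨2, by omega⟩ with he2
  have hv0 : (e0 : ℕ) = 0 := rfl
  have hv1 : (e1 : ℕ) = 1 := rfl
  have hv2 : (e2 : ℕ) = 2 := rfl
  have hrowval : ∀ i : Fin n, rowVal A i = ∑ j : Fin n, (A i j : ℕ) * 2 ^ (n - 1 - (j : ℕ)) :=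
    fun i => rfl
  have hcolval : ∀ j : Fin n, colVal A j = ∑ i : Fin n, (A i j : ℕ) * 2 ^ (n - 1 - (i : ℕ)) :=
    fun j => rfl
  -- Step 1 : A e0 e0 = 1
  have h00 : A e0 e0 = 1 := by
    rcases fin2aux (A e0 e0) with h | h
    · exfalso
      obtain ⟨j, hj1, hj2⟩ := exists_one_ge_aux (A e0) (hrow e0) 1 e0
        (fun j hjk hjne => absurd (Fin.ext (by omega : (j : ℕ) = (e0 : ℕ))) hjne)
      have hlow : 2 ^ (n - 1) ≤ colVal A j := by
        have := val_ge_aux (fun i => A i j) e0 hj2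
        simpa [hcolval, he0] using this
      have hup : colVal A e0 < 2 ^ (n - 1) := by
        have := val_lt_aux (fun i => A i e0) 1
          (fun i hi => by rwa [show i = e0 from Fin.ext (by omega)])
        simpa [hcolval] using this
      have hle := hcA (show e0 ≤ j from by rw [Fin.le_def]; omega)
      omega
    · exact h
  -- Step 2 : A e0 e1 = 1
  have h01 : A e0 e1 = 1 := by
    rcases fin2aux (A e0 e1) with h | h
    · exfalso
      obtain ⟨j, hj1, hj2⟩ := exists_one_ge_aux (A e0) (hrow e0) 2 e0
        (by
          intro j hjk hjne
          have : (j : ℕ) = 1 := by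
            have : (j : ℕ) ≠ 0 := fun h0 => hjne (Fin.ext (by simpa [he0] using h0))
            omega
          rwa [show j = e1 from Fin.ext (by simpa [he1] using this)])
      have hlow : 2 ^ (n - 1) ≤ colVal A j := by
        have := val_ge_aux (fun i => A i j) e0 hj2
        simpa [hcolval, he0] using this
      have hup : colVal A e1 < 2 ^ (n - 1) := by
        have := val_lt_aux (fun i => A i e1) 1
          (fun i hi => by rwa [show i = e0 from Fin.ext (by omega)])
        simpa [hcolval] using this
      have hle := hcA (show e1 ≤ j from by rw [Fin.le_def]; simp [he1]; omega)
      omega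
    · exact h
  -- Step 3 : A e1 e0 = 1
  have h10 : A e1 e0 = 1 := by
    rcases fin2aux (A e1 e0) with h | h
    · exfalso
      obtain ⟨i, hi1, hi2⟩ := exists_one_ge_aux (fun i => A i e0) (hcol e0) 2 e0
        (by
          intro i hik hine
          have : (i : ℕ) = 1 := by
            have : (i : ℕ) ≠ 0 := fun h0 => hine (Fin.ext (by simpa [he0] using h0))
            omega
          rwa [show i = e1 from Fin.ext (by simpa [he1] using this)])
      have hlow : 2 ^ (n - 1) ≤ rowVal A i := by
        have := val_ge_aux (A i) e0 hi2
        simpa [hrowval, he0] using this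
      have hup : rowVal A e1 < 2 ^ (n - 1) := by
        have := val_lt_aux (A e1) 1
          (fun j hj => by rwa [show j = e0 from Fin.ext (by omega)])
        simpa [hrowval] using this
      have hle := hrA (show e1 ≤ i from by rw [Fin.le_def]; simp [he1]; omega)
      omega
    · exact h
  have hne01 : e0 ≠ e1 := by simp [he0, he1, Fin.ext_iff]
  -- zeros in row 0 and column 0
  have h0j : ∀ j : Fin n, j ≠ e0 → j ≠ e1 → A e0 j = 0 :=
    three_aux (A e0) (hrow e0) e0 e1 hne01 h00 h01
  have hi0 : ∀ i : Fin n, i ≠ e0 → i ≠ e1 → A i e0 = 0 :=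
    three_aux (fun i => A i e0) (hcol e0) e0 e1 hne01 h00 h10
  have hne20 : e2 ≠ e0 := by simp [he0, he2, Fin.ext_iff]
  have hne21 : e2 ≠ e1 := by simp [he1, he2, Fin.ext_iff]
  have h22' : A e1 e1 = 0 := h22
  constructor
  -- A e1 e2 = 1
  · rcases fin2aux (A e1 e2) with h12 | h12
    · exfalso
      obtain ⟨j, hj1, hj2⟩ := exists_one_ge_aux (A e1) (hrow e1) 3 e0
        (by
          intro j hjk hjne
          have hj0 : (j : ℕ) ≠ 0 := fun h0 => hjne (Fin.ext (by simpa [he0] using h0))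
          rcases (by omega : (j : ℕ) = 1 ∨ (j : ℕ) = 2) with h' | h'
          · rwa [show j = e1 from Fin.ext (by simpa [he1] using h')]
          · rwa [show j = e2 from Fin.ext (by simpa [he2] using h')])
      have hlow : 2 ^ (n - 2) ≤ colVal A j := by
        have := val_ge_aux (fun i => A i j) e1 hj2
        have he : n - 1 - (e1 : ℕ) = n - 2 := by simp [he1]; omega
        rw [he] at this
        simpa [hcolval] using this
      have hup : colVal A e2 < 2 ^ (n - 2) := by
        have := val_lt_aux (fun i => A i e2) 2
          (by
            intro i hi
            rcases (by omega : (i : ℕ) = 0 ∨ (i : ℕ) = 1) with h' | h'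
            · rw [show i = e0 from Fin.ext (by simpa [he0] using h')]
              exact h0j e2 hne20 hne21
            · rwa [show i = e1 from Fin.ext (by simpa [he1] using h')])
        simpa [hcolval] using this
      have hle := hcA (show e2 ≤ j from by rw [Fin.le_def]; simp [he2]; omega)
      omega
    · exact h12
  -- A e2 e1 = 1
  · rcases fin2aux (A e2 e1) with h21 | h21
    · exfalso
      obtain ⟨i, hi1, hi2⟩ := exists_one_ge_aux (fun i => A i e1) (hcol e1) 3 e0
        (by
          intro i hik hine
          have hi0' : (i : ℕ) ≠ 0 := fun h0 => hine (Fin.ext (by simpa [he0] using h0))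
          rcases (by omega : (i : ℕ) = 1 ∨ (i : ℕ) = 2) with h' | h'
          · rwa [show i = e1 from Fin.ext (by simpa [he1] using h')]
          · rwa [show i = e2 from Fin.ext (by simpa [he2] using h')])
      have hlow : 2 ^ (n - 2) ≤ rowVal A i := by
        have := val_ge_aux (A i) e1 hi2
        have he : n - 1 - (e1 : ℕ) = n - 2 := by simp [he1]; omega
        rw [he] at this
        simpa [hrowval] using this
      have hup : rowVal A e2 < 2 ^ (n - 2) := by
        have := val_lt_aux (A e2) 2
          (by
            intro j hj
            rcases (by omega : (j : ℕ) = 0 ∨ (j : ℕ) = 1) with h' | h'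
            · rw [show j = e0 from Fin.ext (by simpa [he0] using h')]
              exact hi0 e2 hne20 hne21
            · rwa [show j = e1 from Fin.ext (by simpa [he1] using h')])
        simpa [hrowval] using this
      have hle := hrA (show e2 ≤ i from by rw [Fin.le_def]; simp [he2]; omega)
      omega
    · exact h21
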